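/- Let G be a finite group and let H < K < G be subgroups. If all maximal chains of H in G have the same length, then all maximal chains of K in G have the same length. -/

import Mathlib

/-- A maximal chain of `H` in the ambient group of length `r`: a chain
`H = c 0 < c 1 < ... < c r = ⊤` where each `c i` is a maximal subgroup of `c (i+1)`,
i.e. each step is a covering relation in the subgroup lattice. -/
def IsMaxChainOf {G : Type*} [Group G] (H : Subgroup G) (r : ℕ) (c : ℕ → Subgroup G) : Prop :=
  c 0 = H ∧ c r = ⊤ ∧ ∀ i < r, c i ⋖ c (i + 1)

/-- All maximal chains of `H` in the ambient group have the same length. -/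
def AllMaxChainsSameLength {G : Type*} [Group G] (H : Subgroup G) : Prop :=
  ∀ (r s : ℕ) (c d : ℕ → Subgroup G),
    IsMaxChainOf H r c → IsMaxChainOf H s d → r = s

/-- In a finite group, any pair `H ≤ K` is connected by a covering chain. -/
lemma exists_cov_chain {G : Type*} [Group G] [Finite G] (K : Subgroup G) :
    ∀ H : Subgroup G, H ≤ K →
      ∃ (t : ℕ) (c : ℕ → Subgroup G), c 0 = H ∧ c t = K ∧ ∀ i < t, c i ⋖ c (i + 1) := by
  have wf : WellFounded ((· > ·) : Subgroup G → Subgroup G → Prop) := wellFounded_gt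
  intro H
  induction H using wf.induction with
  | _ H IH =>
    intro hHK
    rcases eq_or_lt_of_le hHK with rfl | hlt
    · exact ⟨0, fun _ => H, rfl, rfl, by omega⟩
    · obtain ⟨M, ⟨hHM, hMK⟩, hmin⟩ :=
        (wellFounded_lt (α := Subgroup G)).has_min {M | H < M ∧ M ≤ K} ⟨K, hlt, le_rfl⟩
      have hcov : H ⋖ M := ⟨hHM, fun L hHL hLM => hmin L ⟨hHL, hLM.le.trans hMK⟩ hLM⟩
      obtain ⟨t, c, hc0, hct, hcc⟩ := IH M hHM hMK
      refine ⟨t + 1, fun i => if i = 0 then H else c (i - 1), by simp, by simp [hct], ?_⟩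
      intro i hi
      rcases Nat.eq_zero_or_pos i with rfl | hpos
      · simpa [hc0] using hcov
      · have h1 : i ≠ 0 := hpos.ne'
        have h2 : i + 1 ≠ 0 := by omega
        simp only [h1, h2, if_false]
        have : i - 1 + 1 = i + 1 - 1 := by omega
        rw [this] at *
        have := hcc (i + 1 - 1 - 1 + 1 - 1) (by omega)
        have e : i + 1 - 1 - 1 + 1 = i + 1 - 1 := by omega
        rw [e] at this
        convert this using 2
        all_goals omega

theorem stmt_1 {G : Type*} [Group G] [Finite G] (H K : Subgroup G)
    (hHK : H < K) (hKG : K < ⊤) (h : AllMaxChainsSameLength H) :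
    AllMaxChainsSameLength K := by
  obtain ⟨t, e, he0, het, hec⟩ := exists_cov_chain K H hHK.le
  -- gluing: a maximal chain of K of length r yields a maximal chain of H of length t + r
  have glue : ∀ (r : ℕ) (c : ℕ → Subgroup G), IsMaxChainOf K r c →
      IsMaxChainOf H (t + r) (fun i => if i ≤ t then e i else c (i - t)) := by
    rintro r c ⟨hc0, hcr, hcc⟩
    refine ⟨by simp [he0], ?_, ?_⟩
    · by_cases hr : r = 0
      · simp [hr, het, ← hc0, hcr ▸ (hr ▸ rfl : c r = c 0)]
      · have : ¬ (t + r ≤ t) := by omega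
        simp only [this, if_false]
        simpa using hcr
    · intro i hi
      by_cases h1 : i + 1 ≤ t
      · have h0 : i ≤ t := by omega
        simp only [h0, h1, if_true]
        exact hec i (by omega)
      · by_cases h0 : i ≤ t
        · have hit : i = t := by omega
          have hr : 0 < r := by omega
          simp only [h0, h1, if_true, if_false]
          have : i + 1 - t = 1 := by omega
          rw [this, hit, het, ← hc0]
          exact hcc 0 hr
        · simp only [h0, h1, if_false]
          have : i + 1 - t = (i - t) + 1 := by omega
          rw [this]
          exact hcc (i - t) (by omega)
  intro r s c d hc hd
  have := h (t + r) (t + s) _ _ (glue r c hc) (glue s d hd)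
  omega
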